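/- For each m ∈ (θ,1): F(s) > F(m) for all s ∈ [0,m), the integral L_m := ∫₀^m ds/√(F(s) − F(m)) is finite and positive, and there exists a function v_m ∈ C²([0, 2L_m]) with v_m'' + f(v_m) = 0 on [0,2L_m], v_m(0) = v_m(2L_m) = 0, 0 < v_m ≤ m on (0,2L_m), v_m(L_m) = m, and v_m'(x)² = F(v_m(x)) − F(m) for all x ∈ [0,2L_m]. -/

import Mathlib

open Set Filter MeasureTheory
open Topology

noncomputable def Fint (f : ℝ → ℝ) (u : ℝ) : ℝ := -2 * ∫ s in (0:ℝ)..u, f s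

lemma Fint_hasDerivAt {f : ℝ → ℝ} (hf : Continuous f) (u : ℝ) :
    HasDerivAt (Fint f) (-2 * f u) u := by
  have h := intervalIntegral.integral_hasDerivAt_right
    (hf.intervalIntegrable 0 u) (hf.stronglyMeasurable.stronglyMeasurableAtFilter)
    hf.continuousAt
  have : Fint f = fun u => -2 * ∫ s in (0:ℝ)..u, f s := rfl
  rw [this]
  exact HasDerivAt.const_mul (-2 : ℝ) h

lemma Fint_zero (f : ℝ → ℝ) : Fint f 0 = 0 := by simp [Fint]

lemma Fint_continuous {f : ℝ → ℝ} (hf : Continuous f) : Continuous (Fint f) := by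
  have : Differentiable ℝ (Fint f) := fun u => (Fint_hasDerivAt hf u).differentiableAt
  exact this.continuous

structure CondF (f : ℝ → ℝ) (α θ lam : ℝ) : Prop where
  smooth : ContDiff ℝ 1 f
  f_zero : f 0 = 0
  df_zero : deriv f 0 < 0
  lam_def : lam = Real.sqrt (-(deriv f 0))
  alpha_pos : 0 < α
  alpha_lt : α < 1
  neg_low : ∀ s ∈ Set.Ioo (0:ℝ) α, f s < 0
  pos_mid : ∀ s ∈ Set.Ioo α (1:ℝ), 0 < f s
  neg_high : ∀ s ∈ Set.Ioi (1:ℝ), f s < 0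
  df_bdd : BddBelow (deriv f '' Set.Ioi (1:ℝ))
  theta_gt : α < θ
  theta_lt : θ < 1
  F_theta : Fint f θ = 0

section
variable {f : ℝ → ℝ} {α θ lam m : ℝ}

lemma part1 (hf : CondF f α θ lam) (hm : m ∈ Set.Ioo θ 1) :
    ∀ s ∈ Set.Ico (0:ℝ) m, Fint f m < Fint f s := by
  have hc := hf.smooth.continuous
  have hd : ∀ u, HasDerivAt (Fint f) (-2 * f u) u := Fint_hasDerivAt hc
  have hcont : Continuous (Fint f) := Fint_continuous hc
  have hmono : StrictMonoOn (Fint f) (Icc 0 α) := by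
    apply strictMonoOn_of_deriv_pos (convex_Icc _ _) hcont.continuousOn
    intro x hx
    rw [interior_Icc] at hx
    rw [(hd x).deriv]
    have := hf.neg_low x hx
    nlinarith
  have hanti : StrictAntiOn (Fint f) (Icc α 1) := by
    apply strictAntiOn_of_deriv_neg (convex_Icc _ _) hcont.continuousOn
    intro x hx
    rw [interior_Icc] at hx
    rw [(hd x).deriv]
    have := hf.pos_mid x hx
    nlinarith
  have hθm : θ ∈ Icc α (1:ℝ) := ⟨hf.theta_gt.le, hf.theta_lt.le⟩
  have hmI : m ∈ Icc α (1:ℝ) := ⟨(hf.theta_gt.trans hm.1).le, hm.2.le⟩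
  have hFm : Fint f m < 0 := by
    have := hanti hθm hmI hm.1
    rwa [hf.F_theta] at this
  intro s hs
  rcases le_or_gt s α with h1 | h1
  · have : Fint f 0 ≤ Fint f s :=
      hmono.monotoneOn (left_mem_Icc.2 hf.alpha_pos.le) ⟨hs.1, h1⟩ hs.1
    rw [Fint_zero] at this; linarith
  rcases le_or_gt s θ with h2 | h2
  · have : Fint f θ ≤ Fint f s :=
      hanti.antitoneOn ⟨h1.le, le_trans h2 hf.theta_lt.le⟩ hθm h2
    rw [hf.F_theta] at this; linarith
  · exact hanti ⟨h1.le, (hs.2.trans hm.2).le⟩ hmI hs.2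



lemma part2 (hf : CondF f α θ lam) (hm : m ∈ Set.Ioo θ 1) :
    IntervalIntegrable (fun s => 1 / Real.sqrt (Fint f s - Fint f m)) volume 0 m := by
  have hc := hf.smooth.continuous
  have hθ0 : (0:ℝ) < θ := hf.alpha_pos.trans hf.theta_gt
  have hθm : θ < m := hm.1
  have hpos := part1 hf hm
  set h : ℝ → ℝ := fun s => 1 / Real.sqrt (Fint f s - Fint f m) with hh
  have hGc : Continuous fun s => Real.sqrt (Fint f s - Fint f m) :=
    Real.continuous_sqrt.comp ((Fint_continuous hc).sub continuous_const)
  have int1 : IntervalIntegrable h volume 0 θ := by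
    apply ContinuousOn.intervalIntegrable
    rw [uIcc_of_le hθ0.le]
    apply continuousOn_const.div hGc.continuousOn
    intro x hx
    have : Fint f m < Fint f x := hpos x ⟨hx.1, lt_of_le_of_lt hx.2 hθm⟩
    exact (Real.sqrt_pos.2 (by linarith)).ne'
  obtain ⟨s₀, hs₀, hmin⟩ := isCompact_Icc.exists_isMinOn (nonempty_Icc.2 hθm.le)
    hc.continuousOn
  have hc0 : 0 < f s₀ :=
    hf.pos_mid s₀ ⟨hf.theta_gt.trans_le hs₀.1, lt_of_le_of_lt hs₀.2 hm.2⟩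
  set c := f s₀ with hcdef
  have key : ∀ s ∈ Icc θ m, 2*c*(m-s) ≤ Fint f s - Fint f m := by
    intro s hs
    have e0 : (∫ x in (0:ℝ)..s, f x) + ∫ x in s..m, f x = ∫ x in (0:ℝ)..m, f x :=
      intervalIntegral.integral_add_adjacent_intervals
        (hc.intervalIntegrable 0 s) (hc.intervalIntegrable s m)
    have e2 : c * (m - s) ≤ ∫ x in s..m, f x := by
      have hmono := intervalIntegral.integral_mono_on hs.2
        (intervalIntegrable_const : IntervalIntegrable (fun _ => c) volume s m)
        (hc.intervalIntegrable s m)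
        (fun x hx => hmin ⟨le_trans hs.1 hx.1, hx.2⟩)
      rw [intervalIntegral.integral_const] at hmono
      simpa [smul_eq_mul, mul_comm] using hmono
    simp only [Fint]
    linarith
  have hg₀int : IntervalIntegrable
      (fun s => (Real.sqrt (2*c))⁻¹ * (m - s) ^ (-(1/2) : ℝ)) volume θ m := by
    have h1 : IntervalIntegrable (fun x : ℝ => x ^ (-(1/2):ℝ)) volume 0 (m - θ) :=
      intervalIntegral.intervalIntegrable_rpow' (by norm_num)
    have h2 := h1.comp_sub_left m
    norm_num at h2
    exact (IntervalIntegrable.symm h2).const_mul _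
  have int2 : IntervalIntegrable h volume θ m := by
    apply hg₀int.mono_fun' ((by simp only [hh, one_div]; exact
      hGc.measurable.inv : Measurable h).aestronglyMeasurable)
    rw [Filter.EventuallyLE, ae_restrict_iff' measurableSet_uIoc]
    apply ae_of_all
    intro x hx
    rw [uIoc_of_le hθm.le] at hx
    have hx2 : (0:ℝ) ≤ m - x := by linarith [hx.2]
    have hxnn : 0 ≤ h x := by positivity
    have hnorm : ‖h x‖ = h x := by rw [Real.norm_eq_abs, abs_of_nonneg hxnn]
    rw [hnorm]
    have hrw : (m - x) ^ (-(1/2) : ℝ) = (Real.sqrt (m - x))⁻¹ := by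
      rw [Real.sqrt_eq_rpow, ← Real.rpow_neg hx2]
    rcases eq_or_lt_of_le hx.2 with he | hlt
    · simp [hh, he, Real.sqrt_eq_zero']
    · have hG := key x ⟨hx.1.le, hx.2⟩
      have hp : 0 < 2*c*(m-x) := by nlinarith
      have hs1 : Real.sqrt (2*c*(m-x)) ≤ Real.sqrt (Fint f x - Fint f m) :=
        Real.sqrt_le_sqrt hG
      have hs2 : Real.sqrt (2*c*(m-x)) = Real.sqrt (2*c) * Real.sqrt (m-x) :=
        Real.sqrt_mul (by positivity) _
      rw [hrw, hh]
      simp only []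
      rw [show (Real.sqrt (2*c))⁻¹ * (Real.sqrt (m-x))⁻¹
          = 1 / (Real.sqrt (2*c) * Real.sqrt (m-x)) by rw [one_div, mul_inv]]
      apply one_div_le_one_div_of_le
      · rw [← hs2]; exact Real.sqrt_pos.2 hp
      · rw [← hs2]; exact hs1
  exact int1.trans int2

end

theorem stmt6 (f : ℝ → ℝ) (α θ lam : ℝ) (hf : CondF f α θ lam)
    (m : ℝ) (hm : m ∈ Set.Ioo θ (1:ℝ)) (L : ℝ)
    (hL : L = ∫ s in (0:ℝ)..m, 1 / Real.sqrt (Fint f s - Fint f m)) :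
    (∀ s ∈ Set.Ico (0:ℝ) m, Fint f m < Fint f s) ∧
    IntervalIntegrable (fun s => 1 / Real.sqrt (Fint f s - Fint f m))
      MeasureTheory.volume 0 m ∧
    0 < L ∧
    ∃ v : ℝ → ℝ,
      ContDiffOn ℝ 2 v (Set.Icc 0 (2 * L)) ∧
      (∀ x ∈ Set.Icc (0:ℝ) (2 * L), deriv (deriv v) x + f (v x) = 0) ∧
      v 0 = 0 ∧ v (2 * L) = 0 ∧
      (∀ x ∈ Set.Ioo (0:ℝ) (2 * L), 0 < v x ∧ v x ≤ m) ∧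
      v L = m ∧
      (∀ x ∈ Set.Icc (0:ℝ) (2 * L), (deriv v x) ^ 2 = Fint f (v x) - Fint f m) := by
  have hc := hf.smooth.continuous
  have hp1 := part1 hf hm
  have hp2 := part2 hf hm
  have hm0 : (0:ℝ) < m := lt_trans (hf.alpha_pos.trans hf.theta_gt) hm.1
  have hLpos : 0 < L := by
    rw [hL]
    apply intervalIntegral.intervalIntegral_pos_of_pos_on hp2 _ hm0
    intro x hx
    have := hp1 x ⟨hx.1.le, hx.2⟩
    exact div_pos one_pos (Real.sqrt_pos.2 (by linarith))
  refine ⟨hp1, hp2, hLpos, ?_⟩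
  -- notation
  set G : ℝ → ℝ := fun u => Fint f u - Fint f m with hGdef
  have hG' : ∀ u, HasDerivAt G (-2 * f u) u :=
    fun u => (Fint_hasDerivAt hc u).sub_const _
  have hGc : Continuous G := ((Fint_continuous hc).sub continuous_const)
  have hGm : G m = 0 := sub_self _
  have hGpos0 : ∀ s ∈ Ico (0:ℝ) m, 0 < G s := by
    intro s hs; have := hp1 s hs; simp only [hGdef]; linarith
  -- a small margin to the left of 0
  obtain ⟨ε', hε', hball⟩ : ∃ ε > 0, ∀ u ∈ Icc (-ε) (0:ℝ), 0 < G u := by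
    have h0 : 0 < G 0 := hGpos0 0 ⟨le_refl _, hm0⟩
    have : {u | 0 < G u} ∈ 𝓝 (0:ℝ) :=
      hGc.continuousAt.preimage_mem_nhds (Ioi_mem_nhds h0)
    obtain ⟨ε, hε, hb⟩ := Metric.mem_nhds_iff.1 this
    refine ⟨ε/2, by linarith, fun u hu => hb ?_⟩
    simp only [Metric.mem_ball, Real.dist_eq, sub_zero]
    rw [abs_lt]
    constructor <;> [linarith [hu.1]; linarith [hu.2]]
  have hGJ : ∀ u ∈ Ico (-ε') m, 0 < G u := by
    intro u hu
    rcases le_or_gt u 0 with h | h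
    · exact hball u ⟨hu.1, h⟩
    · exact hGpos0 u ⟨h.le, hu.2⟩
  have hεm : -ε' ≤ m := by linarith
  have hGge : ∀ u ∈ Icc (-ε') m, 0 ≤ G u := by
    intro u hu
    rcases eq_or_lt_of_le hu.2 with he | hlt
    · rw [he, hGm]
    · exact (hGJ u ⟨hu.1, hlt⟩).le
  set h : ℝ → ℝ := fun s => 1 / Real.sqrt (Fint f s - Fint f m) with hh
  have hGh : ∀ s, h s = 1 / Real.sqrt (G s) := fun s => rfl
  have hhmeas : Measurable h := by
    simp only [hh, one_div]
    exact (Real.continuous_sqrt.comp hGc).measurable.inv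
  have hhc : ∀ u, 0 < G u → ContinuousAt h u := by
    intro u hu
    rw [hh]
    apply ContinuousAt.div continuousAt_const
      (Real.continuous_sqrt.comp hGc).continuousAt
    exact (Real.sqrt_pos.2 hu).ne'
  have hhpos : ∀ u, 0 < G u → 0 < h u := by
    intro u hu
    exact div_pos one_pos (Real.sqrt_pos.2 hu)
  -- integrability over [-ε', m]
  have hbig : IntervalIntegrable h volume (-ε') m := by
    have left : IntervalIntegrable h volume (-ε') 0 := by
      apply ContinuousOn.intervalIntegrable
      rw [uIcc_of_le (by linarith : -ε' ≤ (0:ℝ))]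
      exact fun x hx => (hhc x (hball x hx)).continuousWithinAt
    exact left.trans hp2
  have hint : ∀ a ∈ Icc (-ε') m, ∀ b ∈ Icc (-ε') m, IntervalIntegrable h volume a b := by
    intro a ha b hb
    apply hbig.mono_set
    rw [uIcc_of_le hεm]
    exact uIcc_subset_Icc ha hb
  -- the time map T
  set T : ℝ → ℝ := fun u => ∫ s in (0:ℝ)..u, h s with hT
  have hmem0 : (0:ℝ) ∈ Icc (-ε') m := ⟨by linarith, hm0.le⟩
  have hT' : ∀ u ∈ Ioo (-ε') m, HasDerivAt T (h u) u := by
    intro u hu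
    exact intervalIntegral.integral_hasDerivAt_right
      (hint 0 hmem0 u ⟨hu.1.le, hu.2.le⟩)
      (hhmeas.stronglyMeasurable.stronglyMeasurableAtFilter)
      (hhc u (hGJ u ⟨hu.1.le, hu.2⟩))
  have hTcont : ContinuousOn T (Icc (-ε') m) := by
    have := intervalIntegral.continuousOn_primitive_interval'
      hbig (by rw [uIcc_of_le hεm]; exact hmem0)
    rwa [uIcc_of_le hεm] at this
  have hTmono : StrictMonoOn T (Icc (-ε') m) := by
    apply strictMonoOn_of_deriv_pos (convex_Icc _ _) hTcont
    intro x hx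
    rw [interior_Icc] at hx
    rw [(hT' x hx).deriv]
    exact hhpos x (hGJ x ⟨hx.1.le, hx.2⟩)
  have T0 : T 0 = 0 := intervalIntegral.integral_same
  have Tm : T m = L := hL.symm
  set a₀ : ℝ := T (-ε') with ha₀def
  have ha₀ : a₀ < 0 := by
    have := hTmono ⟨le_refl _, hεm⟩ hmem0 (by linarith : -ε' < (0:ℝ))
    rwa [T0] at this
  have hsurj : ∀ y ∈ Icc a₀ L, ∃ u ∈ Icc (-ε') m, T u = y := by
    intro y hy
    have := intermediate_value_Icc hεm hTcont
    rw [Tm] at this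
    obtain ⟨u, hu, hTu⟩ := this hy
    exact ⟨u, hu, hTu⟩
  set w : ℝ → ℝ := Function.invFunOn T (Icc (-ε') m) with hwdef
  have hTw : ∀ y ∈ Icc a₀ L, T (w y) = y :=
    fun y hy => Function.invFunOn_eq (hsurj y hy)
  have hwmem : ∀ y ∈ Icc a₀ L, w y ∈ Icc (-ε') m :=
    fun y hy => Function.invFunOn_mem (hsurj y hy)
  have hwT : ∀ u ∈ Icc (-ε') m, w (T u) = u :=
    fun u hu => hTmono.injOn.leftInvOn_invFunOn hu
  have hwL : w L = m := by rw [← Tm]; exact hwT m ⟨hεm, le_refl _⟩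
  have hw0 : w 0 = 0 := by nth_rewrite 1 [← T0]; exact hwT 0 hmem0
  have hwmono : StrictMonoOn w (Icc a₀ L) := by
    intro y1 h1 y2 h2 hlt
    by_contra hge
    push_neg at hge
    have := hTmono.monotoneOn (hwmem y2 h2) (hwmem y1 h1) hge
    rw [hTw y1 h1, hTw y2 h2] at this
    exact absurd hlt (not_lt.2 this)
  have hwIoo : ∀ y ∈ Ioo a₀ L, w y ∈ Ioo (-ε') m := by
    intro y hy
    have hmem := hwmem y (Ioo_subset_Icc_self hy)
    constructor
    · rcases eq_or_lt_of_le hmem.1 with he | hlt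
      · exfalso
        have : T (w y) = a₀ := by rw [← he]
        rw [hTw y (Ioo_subset_Icc_self hy)] at this
        exact absurd this (ne_of_gt hy.1)
      · exact hlt
    · rcases eq_or_lt_of_le hmem.2 with he | hlt
      · exfalso
        have : T (w y) = L := by rw [he, Tm]
        rw [hTw y (Ioo_subset_Icc_self hy)] at this
        exact absurd this (ne_of_lt hy.2)
      · exact hlt
  have himage : Icc (-ε') m ⊆ w '' (Icc a₀ L) := by
    intro u hu
    refine ⟨T u, ⟨?_, ?_⟩, hwT u hu⟩
    · exact hTmono.monotoneOn ⟨le_refl _, hεm⟩ hu hu.1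
    · rw [← Tm]; exact hTmono.monotoneOn hu ⟨hεm, le_refl _⟩ hu.2
  have hwcontI : ∀ y ∈ Ioo a₀ L, ContinuousAt w y := by
    intro y hy
    apply hwmono.continuousAt_of_image_mem_nhds (Icc_mem_nhds hy.1 hy.2)
    exact mem_of_superset (isOpen_Ioo.mem_nhds (hwIoo y hy))
      (Ioo_subset_Icc_self.trans himage)
  have hwcontL : ContinuousWithinAt w (Iic L) L := by
    apply hwmono.continuousWithinAt_left_of_image_mem_nhdsWithin
      (Icc_mem_nhdsLE (by linarith : a₀ < L))
    rw [hwL]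
    exact mem_of_superset (Icc_mem_nhdsLE (by linarith : -ε' < m)) himage
  have hw' : ∀ y ∈ Ioo a₀ L, HasDerivAt w (Real.sqrt (G (w y))) y := by
    intro y hy
    have hy' := hwIoo y hy
    have hGpos : 0 < G (w y) := hGJ _ ⟨hy'.1.le, hy'.2⟩
    have hne : h (w y) ≠ 0 := (hhpos _ hGpos).ne'
    have hev : ∀ᶠ z in 𝓝 y, T (w z) = z :=
      eventually_of_mem (isOpen_Ioo.mem_nhds hy)
        (fun z hz => hTw z (Ioo_subset_Icc_self hz))
    have := HasDerivAt.of_local_left_inverse (hwcontI y hy) (hT' (w y) hy') hne hev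
    have heq : (h (w y))⁻¹ = Real.sqrt (G (w y)) := by
      rw [hGh, one_div, inv_inv]
    rwa [heq] at this
  -- the solution and its derivative
  set v : ℝ → ℝ := fun x => if x ≤ L then w x else w (2*L - x) with hvdef
  set V : ℝ → ℝ := fun x => if x ≤ L then Real.sqrt (G (w x))
    else -Real.sqrt (G (w (2*L - x))) with hVdef
  have hvLeq : ∀ x, x ≤ L → v x = w x := fun x hx => if_pos hx
  have hvReq : ∀ x, ¬ x ≤ L → v x = w (2*L - x) := fun x hx => if_neg hx
  have hVLeq : ∀ x, x ≤ L → V x = Real.sqrt (G (w x)) := fun x hx => if_pos hx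
  have hVReq : ∀ x, ¬ x ≤ L → V x = -Real.sqrt (G (w (2*L - x))) := fun x hx => if_neg hx
  have hsq : ∀ y ∈ Ioo a₀ L, HasDerivAt (fun z => Real.sqrt (G (w z))) (-f (w y)) y := by
    intro y hy
    have hy' := hwIoo y hy
    have hGpos : 0 < G (w y) := hGJ _ ⟨hy'.1.le, hy'.2⟩
    have h1 : HasDerivAt (fun z => G (w z)) (-2 * f (w y) * Real.sqrt (G (w y))) y :=
      (hG' (w y)).comp y (hw' y hy)
    have h2 := (Real.hasDerivAt_sqrt hGpos.ne').comp y h1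
    have h3 : HasDerivAt (fun z => Real.sqrt (G (w z)))
        (1 / (2 * Real.sqrt (G (w y))) * (-2 * f (w y) * Real.sqrt (G (w y)))) y := h2
    convert h3 using 1
    have hs0 : Real.sqrt (G (w y)) ≠ 0 := (Real.sqrt_pos.2 hGpos).ne'
    field_simp
  have hvl : ∀ x ∈ Ioo a₀ L, HasDerivAt v (Real.sqrt (G (w x))) x := by
    intro x hx
    apply HasDerivAt.congr_of_eventuallyEq (hw' x hx)
    exact eventually_of_mem (Iio_mem_nhds hx.2) (fun z hz => hvLeq z (le_of_lt hz))
  have hVl : ∀ x ∈ Ioo a₀ L, HasDerivAt V (-f (w x)) x := by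
    intro x hx
    apply HasDerivAt.congr_of_eventuallyEq (hsq x hx)
    exact eventually_of_mem (Iio_mem_nhds hx.2) (fun z hz => hVLeq z (le_of_lt hz))
  have hIR : ∀ x, x ∈ Ioo L (2*L - a₀) → 2*L - x ∈ Ioo a₀ L := by
    intro x hx
    constructor
    · linarith [hx.2]
    · linarith [hx.1]
  have hrefl : ∀ x : ℝ, HasDerivAt (fun z : ℝ => 2*L - z) (-1) x := by
    intro x
    simpa using (hasDerivAt_id x).const_sub (2*L)
  have hvr : ∀ x ∈ Ioo L (2*L - a₀), HasDerivAt v (-Real.sqrt (G (w (2*L - x)))) x := by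
    intro x hx
    have hR := hIR x hx
    have h1 : HasDerivAt (fun z => w (2*L - z)) (Real.sqrt (G (w (2*L - x))) * (-1)) x :=
      (hw' _ hR).comp x (hrefl x)
    rw [mul_neg_one] at h1
    apply h1.congr_of_eventuallyEq
    exact eventually_of_mem (Ioi_mem_nhds hx.1) (fun z hz => hvReq z (not_le.2 hz))
  have hVr : ∀ x ∈ Ioo L (2*L - a₀), HasDerivAt V (-f (w (2*L - x))) x := by
    intro x hx
    have hR := hIR x hx
    have h1 : HasDerivAt (fun z => Real.sqrt (G (w (2*L - z)))) (-f (w (2*L - x)) * (-1)) x :=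
      (hsq _ hR).comp x (hrefl x)
    have h2 := h1.neg
    have he : -(-f (w (2*L - x)) * (-1)) = -f (w (2*L - x)) := by ring
    rw [he] at h2
    apply h2.congr_of_eventuallyEq
    exact eventually_of_mem (Ioi_mem_nhds hx.1) (fun z hz => hVReq z (not_le.2 hz))
  -- limits at L
  have haL : a₀ < L := lt_trans ha₀ hLpos
  have hwLim : Tendsto w (𝓝[<] L) (𝓝 m) := by
    have h1 : Tendsto w (𝓝[Iic L] L) (𝓝 (w L)) := hwcontL
    rw [hwL] at h1
    exact h1.mono_left (nhdsWithin_mono L Iio_subset_Iic_self)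
  have hreflT : Tendsto (fun z : ℝ => 2*L - z) (𝓝[>] L) (𝓝[<] L) := by
    apply tendsto_nhdsWithin_of_tendsto_nhds_of_eventually_within
    · have h1 : Tendsto (fun z : ℝ => 2*L - z) (𝓝 L) (𝓝 (2*L - L)) :=
        ((continuous_const.sub continuous_id).tendsto L)
      have h2 : 2*L - L = L := by ring
      rw [h2] at h1
      exact h1.mono_left nhdsWithin_le_nhds
    · exact eventually_of_mem self_mem_nhdsWithin
        (fun z hz => by simp only [mem_Iio]; linarith [mem_Ioi.1 hz])
  have hwLimR : Tendsto (fun z => w (2*L - z)) (𝓝[>] L) (𝓝 m) := hwLim.comp hreflT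
  have hvL : v L = m := by rw [hvLeq L le_rfl, hwL]
  have hVL : V L = 0 := by rw [hVLeq L le_rfl, hwL, hGm, Real.sqrt_zero]
  have hvLimL : Tendsto v (𝓝[<] L) (𝓝 m) := by
    apply Tendsto.congr' _ hwLim
    exact eventually_of_mem self_mem_nhdsWithin (fun z hz => (hvLeq z (le_of_lt hz)).symm)
  have hvLimR : Tendsto v (𝓝[>] L) (𝓝 m) := by
    apply Tendsto.congr' _ hwLimR
    exact eventually_of_mem self_mem_nhdsWithin (fun z hz => (hvReq z (not_le.2 hz)).symm)
  have hIooL : Ioo a₀ L ∈ 𝓝[<] L := Ioo_mem_nhdsLT_of_mem ⟨haL, le_rfl⟩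
  have hIooR : Ioo L (2*L - a₀) ∈ 𝓝[>] L := Ioo_mem_nhdsGT_of_mem ⟨le_rfl, by linarith⟩
  have hsqGcont : Continuous fun u => Real.sqrt (G u) := Real.continuous_sqrt.comp hGc
  -- derivative of v at L
  have hvderivL : HasDerivAt v 0 L := by
    have hleft : HasDerivWithinAt v 0 (Iic L) L := by
      have hdiff : DifferentiableOn ℝ v (Ioo a₀ L) :=
        fun z hz => (hvl z hz).differentiableAt.differentiableWithinAt
      refine hasDerivWithinAt_Iic_of_tendsto_deriv hdiff ?_ hIooL ?_
      · have h1 := hvLimL.mono_left (nhdsWithin_mono _ (Ioo_subset_Iio_self : Ioo a₀ L ⊆ _))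
        rwa [← hvL] at h1
      · have h1 : Tendsto (fun z => Real.sqrt (G (w z))) (𝓝[<] L) (𝓝 0) := by
          have h2 := (hsqGcont.tendsto m).comp hwLim
          rwa [hGm, Real.sqrt_zero] at h2
        apply Tendsto.congr' _ h1
        exact eventually_of_mem hIooL (fun z hz => ((hvl z hz).deriv).symm)
    have hright : HasDerivWithinAt v 0 (Ici L) L := by
      have hdiff : DifferentiableOn ℝ v (Ioo L (2*L - a₀)) :=
        fun z hz => (hvr z hz).differentiableAt.differentiableWithinAt
      refine hasDerivWithinAt_Ici_of_tendsto_deriv hdiff ?_ hIooR ?_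
      · have h1 := hvLimR.mono_left (nhdsWithin_mono _ (Ioo_subset_Ioi_self : Ioo L (2*L - a₀) ⊆ _))
        rwa [← hvL] at h1
      · have h1 : Tendsto (fun z => -Real.sqrt (G (w (2*L - z)))) (𝓝[>] L) (𝓝 0) := by
          have h2 := ((hsqGcont.tendsto m).comp hwLimR).neg
          rwa [hGm, Real.sqrt_zero, neg_zero] at h2
        apply Tendsto.congr' _ h1
        exact eventually_of_mem hIooR (fun z hz => ((hvr z hz).deriv).symm)
    have := hleft.union hright
    rwa [Iic_union_Ici, hasDerivWithinAt_univ] at this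
  -- derivative of V at L
  have hVderivL : HasDerivAt V (-f m) L := by
    have hVLimL : Tendsto V (𝓝[<] L) (𝓝 0) := by
      have h1 : Tendsto (fun z => Real.sqrt (G (w z))) (𝓝[<] L) (𝓝 0) := by
        have h2 := (hsqGcont.tendsto m).comp hwLim
        rwa [hGm, Real.sqrt_zero] at h2
      apply Tendsto.congr' _ h1
      exact eventually_of_mem self_mem_nhdsWithin
        (fun z hz => (hVLeq z (le_of_lt hz)).symm)
    have hVLimR : Tendsto V (𝓝[>] L) (𝓝 0) := by
      have h1 : Tendsto (fun z => -Real.sqrt (G (w (2*L - z)))) (𝓝[>] L) (𝓝 0) := by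
        have h2 := ((hsqGcont.tendsto m).comp hwLimR).neg
        rwa [hGm, Real.sqrt_zero, neg_zero] at h2
      apply Tendsto.congr' _ h1
      exact eventually_of_mem self_mem_nhdsWithin
        (fun z hz => (hVReq z (not_le.2 hz)).symm)
    have hleft : HasDerivWithinAt V (-f m) (Iic L) L := by
      have hdiff : DifferentiableOn ℝ V (Ioo a₀ L) :=
        fun z hz => (hVl z hz).differentiableAt.differentiableWithinAt
      refine hasDerivWithinAt_Iic_of_tendsto_deriv hdiff ?_ hIooL ?_
      · have h1 := hVLimL.mono_left (nhdsWithin_mono _ (Ioo_subset_Iio_self : Ioo a₀ L ⊆ _))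
        rwa [← hVL] at h1
      · have h1 : Tendsto (fun z => -f (w z)) (𝓝[<] L) (𝓝 (-f m)) :=
          ((hc.tendsto m).comp hwLim).neg
        apply Tendsto.congr' _ h1
        exact eventually_of_mem hIooL (fun z hz => ((hVl z hz).deriv).symm)
    have hright : HasDerivWithinAt V (-f m) (Ici L) L := by
      have hdiff : DifferentiableOn ℝ V (Ioo L (2*L - a₀)) :=
        fun z hz => (hVr z hz).differentiableAt.differentiableWithinAt
      refine hasDerivWithinAt_Ici_of_tendsto_deriv hdiff ?_ hIooR ?_
      · have h1 := hVLimR.mono_left (nhdsWithin_mono _ (Ioo_subset_Ioi_self : Ioo L (2*L - a₀) ⊆ _))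
        rwa [← hVL] at h1
      · have h1 : Tendsto (fun z => -f (w (2*L - z))) (𝓝[>] L) (𝓝 (-f m)) :=
          ((hc.tendsto m).comp hwLimR).neg
        apply Tendsto.congr' _ h1
        exact eventually_of_mem hIooR (fun z hz => ((hVr z hz).deriv).symm)
    have := hleft.union hright
    rwa [Iic_union_Ici, hasDerivWithinAt_univ] at this
  -- assembly
  have hvd : ∀ x ∈ Ioo a₀ (2*L - a₀), HasDerivAt v (V x) x := by
    intro x hx
    rcases lt_trichotomy x L with hlt | heq | hgt
    · rw [hVLeq x hlt.le]; exact hvl x ⟨hx.1, hlt⟩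
    · subst heq; rw [hVL]; exact hvderivL
    · rw [hVReq x (not_le.2 hgt)]; exact hvr x ⟨hgt, hx.2⟩
  have hVd : ∀ x ∈ Ioo a₀ (2*L - a₀), HasDerivAt V (-f (v x)) x := by
    intro x hx
    rcases lt_trichotomy x L with hlt | heq | hgt
    · rw [hvLeq x hlt.le]; exact hVl x ⟨hx.1, hlt⟩
    · subst heq; rw [hvL]; exact hVderivL
    · rw [hvReq x (not_le.2 hgt)]; exact hVr x ⟨hgt, hx.2⟩
  have hIopen : IsOpen (Ioo a₀ (2*L - a₀)) := isOpen_Ioo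
  have hsubI : Icc (0:ℝ) (2*L) ⊆ Ioo a₀ (2*L - a₀) := by
    intro x hx
    constructor
    · linarith [hx.1]
    · linarith [hx.2]
  refine ⟨v, ?_, ?_, ?_, ?_, ?_, hvL, ?_⟩
  · -- smoothness
    apply ContDiffOn.mono _ hsubI
    rw [(by norm_num : (2 : WithTop ℕ∞) = 1 + 1), contDiffOn_succ_iff_deriv_of_isOpen hIopen]
    refine ⟨fun x hx => (hvd x hx).differentiableAt.differentiableWithinAt, by simp, ?_⟩
    have hV1 : ContDiffOn ℝ 1 V (Ioo a₀ (2*L - a₀)) := by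
      rw [(by norm_num : (1 : WithTop ℕ∞) = 0 + 1), contDiffOn_succ_iff_deriv_of_isOpen hIopen]
      refine ⟨fun x hx => (hVd x hx).differentiableAt.differentiableWithinAt, by simp, ?_⟩
      rw [contDiffOn_zero]
      have hvcont : ContinuousOn v (Ioo a₀ (2*L - a₀)) :=
        fun x hx => (hvd x hx).continuousAt.continuousWithinAt
      have hfc : ContinuousOn (fun x => -f (v x)) (Ioo a₀ (2*L - a₀)) :=
        (hc.comp_continuousOn hvcont).neg
      exact hfc.congr (fun x hx => (hVd x hx).deriv)
    exact hV1.congr (fun x hx => (hvd x hx).deriv)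
  · -- the ODE
    intro x hx
    have hxI := hsubI hx
    have hev : deriv v =ᶠ[𝓝 x] V :=
      eventually_of_mem (hIopen.mem_nhds hxI) (fun z hz => (hvd z hz).deriv)
    rw [hev.deriv_eq, (hVd x hxI).deriv]
    ring
  · -- v 0 = 0
    rw [hvLeq 0 hLpos.le, hw0]
  · -- v (2L) = 0
    rw [hvReq (2*L) (by linarith : ¬ (2*L ≤ L))]
    have he : 2*L - 2*L = 0 := by ring
    rw [he, hw0]
  · -- positivity
    intro x hx
    have hx0 : (0:ℝ) ∈ Icc a₀ L := ⟨ha₀.le, hLpos.le⟩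
    rcases le_or_gt x L with hle | hgt
    · rw [hvLeq x hle]
      have hxm : x ∈ Icc a₀ L := ⟨by linarith [hx.1], hle⟩
      refine ⟨?_, (hwmem x hxm).2⟩
      have := hwmono hx0 hxm hx.1
      rwa [hw0] at this
    · rw [hvReq x (not_le.2 hgt)]
      have hxm : 2*L - x ∈ Icc a₀ L := ⟨by linarith [hx.2], by linarith⟩
      refine ⟨?_, (hwmem _ hxm).2⟩
      have := hwmono hx0 hxm (by linarith [hx.2])
      rwa [hw0] at this
  · -- energy identity
    intro x hx
    have hxI := hsubI hx
    rw [(hvd x hxI).deriv]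
    rcases le_or_gt x L with hle | hgt
    · rw [hVLeq x hle, hvLeq x hle]
      have hxm : x ∈ Icc a₀ L := ⟨by linarith [hx.1], hle⟩
      rw [Real.sq_sqrt (hGge _ (hwmem x hxm))]
    · rw [hVReq x (not_le.2 hgt), hvReq x (not_le.2 hgt)]
      have hxm : 2*L - x ∈ Icc a₀ L := ⟨by linarith [hx.2], by linarith⟩
      rw [neg_sq, Real.sq_sqrt (hGge _ (hwmem _ hxm))]
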